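/- Let F be a finite field, V a 2-dimensional F-vector space, q : V → F a non-degenerate anisotropic quadratic form, and a ∈ F with a ≠ 0. Then diam(G_{q,a}) ≤ 3; in particular G_{q,a} is connected. -/

import Mathlib

open QuadraticMap Module

/-- The representation graph `G_{q,a}`: vertices are the vectors of `V`, and distinct
`x, y` are adjacent iff `q (x - y) = a`. -/
def repGraph {F V : Type*} [Field F] [AddCommGroup V] [Module F V]
    (q : QuadraticForm F V) (a : F) : SimpleGraph V where
  Adj x y := x ≠ y ∧ q (x - y) = a
  symm := by
    constructor; rintro x y ⟨hxy, h⟩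
    refine ⟨hxy.symm, ?_⟩
    rw [← neg_sub x y, QuadraticMap.map_neg]
    exact h
  loopless := by constructor; rintro x ⟨h, -⟩; exact h rfl

/- ### Auxiliary lemmas -/

open Finset
open scoped Classical

namespace RepGraphAux

set_option linter.unusedSectionVars false
set_option linter.unusedVariables false

section Basic

variable {F V : Type*} [Field F] [AddCommGroup V] [Module F V]
variable (q : QuadraticForm F V)

lemma q_add' (w u : V) : q (w + u) = q w + q u + polar (⇑q) w u := by
  have h : polar (⇑q) w u = q (w + u) - q w - q u := rfl
  linear_combination -h

lemma q_sub' (w u : V) : q (w - u) = q w + q u - polar (⇑q) w u := by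
  rw [sub_eq_add_neg, q_add' q w (-u), polar_neg_right, QuadraticMap.map_neg]
  ring

lemma polar_self' (x : V) : polar (⇑q) x x = q x + q x := by
  rw [polar_self, two_nsmul]

lemma span_pair_eq_top' (hdim : finrank F V = 2) {z u : V} (hz : z ≠ 0)
    (hu : u ∉ Submodule.span F {z}) : Submodule.span F {z, u} = ⊤ := by
  have hfd : FiniteDimensional F V := .of_finrank_pos (by omega)
  have h1 : Submodule.span F {z} < Submodule.span F {z, u} := by
    refine lt_of_le_of_ne (Submodule.span_mono (by simp)) fun h => hu ?_
    rw [h]; exact Submodule.subset_span (by simp)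
  have h2 : finrank F (Submodule.span F {z}) = 1 := finrank_span_singleton hz
  have h3 : finrank F (Submodule.span F {z, u}) ≤ 2 := hdim ▸ Submodule.finrank_le _
  have h4 : 1 < finrank F (Submodule.span F {z, u}) :=
    h2 ▸ Submodule.finrank_lt_finrank_of_lt h1
  exact Submodule.eq_top_of_finrank_eq (by omega)

lemma exists_pair (hdim : finrank F V = 2)
    (hnd : ∀ x : V, (∀ y : V, polar (⇑q) x y = 0) → x = 0)
    {w : V} (hw : w ≠ 0) :
    ∃ e z1 : V, polar (⇑q) w e ≠ 0 ∧ polar (⇑q) w z1 = 0 ∧ z1 ≠ 0 ∧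
      ∀ v : V, ∃ x y : F, v = x • e + y • z1 := by
  obtain ⟨e, he⟩ : ∃ e, polar (⇑q) w e ≠ 0 := by
    by_contra hh; push_neg at hh; exact hw (hnd w hh)
  have he0 : e ≠ 0 := by rintro rfl; exact he (polar_zero_right _ _)
  obtain ⟨v0, hv0⟩ : ∃ v0, v0 ∉ Submodule.span F {e} := by
    by_contra hh; push_neg at hh
    have htop : Submodule.span F {e} = ⊤ := Submodule.eq_top_iff'.mpr hh
    have h1 : finrank F (Submodule.span F {e}) = 1 := finrank_span_singleton he0
    rw [htop, finrank_top] at h1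
    omega
  set z1 := v0 - (polar (⇑q) w v0 / polar (⇑q) w e) • e with hz1def
  have hker : polar (⇑q) w z1 = 0 := by
    rw [hz1def, polar_sub_right, polar_smul_right, smul_eq_mul,
      div_mul_cancel₀ _ he, sub_self]
  have hz10 : z1 ≠ 0 := by
    intro h
    apply hv0
    rw [sub_eq_zero] at h
    exact h ▸ Submodule.smul_mem _ _ (Submodule.mem_span_singleton_self e)
  have hens : e ∉ Submodule.span F {z1} := by
    intro hmem
    obtain ⟨c, hc⟩ := Submodule.mem_span_singleton.mp hmem
    apply he
    rw [← hc, polar_smul_right, hker, smul_zero]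
  have htop := span_pair_eq_top' hdim hz10 hens
  refine ⟨e, z1, he, hker, hz10, fun v => ?_⟩
  have : v ∈ Submodule.span F {z1, e} := htop ▸ Submodule.mem_top
  obtain ⟨x, y, hxy⟩ := Submodule.mem_span_pair.mp this
  exact ⟨y, x, by rw [← hxy]; abel⟩

lemma ker_colinear (hdim : finrank F V = 2)
    (hnd : ∀ x : V, (∀ y : V, polar (⇑q) x y = 0) → x = 0)
    {w z1 z2 : V} (hw : w ≠ 0) (h1 : polar (⇑q) w z1 = 0) (h2 : polar (⇑q) w z2 = 0)
    (hz1 : z1 ≠ 0) : ∃ c : F, z2 = c • z1 := by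
  by_cases hmem : z2 ∈ Submodule.span F {z1}
  · obtain ⟨c, hc⟩ := Submodule.mem_span_singleton.mp hmem
    exact ⟨c, hc.symm⟩
  · exfalso
    obtain ⟨e, he⟩ : ∃ e, polar (⇑q) w e ≠ 0 := by
      by_contra hh
      push_neg at hh
      exact hw (hnd w hh)
    have htop := span_pair_eq_top' hdim hz1 hmem
    have : e ∈ Submodule.span F {z1, z2} := htop ▸ Submodule.mem_top
    obtain ⟨x, y, hxy⟩ := Submodule.mem_span_pair.mp this
    apply he
    rw [← hxy, polar_add_right, polar_smul_right, polar_smul_right, h1, h2]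
    simp

end Basic

section Counting

variable {F V : Type*} [Field F] [Fintype F] [AddCommGroup V] [Module F V]
variable (q : QuadraticForm F V) [Fintype V]

lemma sphere_card_of_mem (hdim : finrank F V = 2)
    (hnd : ∀ x : V, (∀ y : V, polar (⇑q) x y = 0) → x = 0)
    (haniso : ∀ v : V, q v = 0 → v = 0)
    {t : F} (ht : t ≠ 0) {u0 : V} (hu0 : q u0 = t) :
    (univ.filter fun v : V => q v = t).card = Fintype.card F + 1 := by
  have haniso' : ∀ v : V, v ≠ 0 → q v ≠ 0 := fun v hv h => hv (haniso v h)
  have hu00 : u0 ≠ 0 := fun h => ht (by rw [← hu0, h, QuadraticMap.map_zero])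
  obtain ⟨e, z1, he, hz1, hz10, hspan⟩ := exists_pair q hdim hnd hu00
  set Z : Finset V := univ.filter (fun z : V => z ≠ 0 ∧ q z + polar (⇑q) u0 z = 0) with hZ
  have hmem : u0 ∈ univ.filter fun v : V => q v = t := by simp [hu0]
  have step1 : (univ.filter fun v : V => q v = t).card = Z.card + 1 := by
    rw [← Finset.card_erase_add_one hmem]
    congr 1
    apply Finset.card_bij (fun u _ => u - u0)
    · intro u hu
      simp only [Finset.mem_erase, Finset.mem_filter] at hu
      obtain ⟨hne, -, hqu⟩ := hu
      have : q (u0 + (u - u0)) = t := by rw [add_sub_cancel]; exact hqu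
      rw [q_add', hu0] at this
      simp only [hZ, Finset.mem_filter, Finset.mem_univ, true_and]
      exact ⟨sub_ne_zero.mpr hne, by linear_combination this⟩
    · intro a _ b _ h; exact sub_left_injective h
    · intro z hz
      simp only [hZ, Finset.mem_filter, Finset.mem_univ, true_and] at hz
      refine ⟨u0 + z, ?_, by abel⟩
      simp only [Finset.mem_erase, Finset.mem_filter, Finset.mem_univ, true_and]
      constructor
      · intro h; exact hz.1 (by linear_combination (norm := abel) h)
      · rw [q_add', hu0]; linear_combination hz.2
  have hQs : ∀ s : F, q (e + s • z1) ≠ 0 := by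
    intro s
    apply haniso'
    intro h
    apply he
    have hh : e = (-s) • z1 := by
      rw [neg_smul, ← sub_eq_zero, sub_neg_eq_add]; exact h
    rw [hh, polar_smul_right, hz1, smul_zero]
  have hpol : ∀ s : F, polar (⇑q) u0 (e + s • z1) = polar (⇑q) u0 e := by
    intro s; rw [polar_add_right, polar_smul_right, hz1, smul_zero, add_zero]
  have step2 : Z.card = Fintype.card F := by
    rw [← Finset.card_univ (α := F)]
    symm
    apply Finset.card_bij
      (fun s _ => (-(polar (⇑q) u0 e) / q (e + s • z1)) • (e + s • z1))
    · intro s _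
      set c := -(polar (⇑q) u0 e) / q (e + s • z1) with hc
      have hc0 : c ≠ 0 := by
        rw [hc]; exact div_ne_zero (neg_ne_zero.mpr he) (hQs s)
      simp only [hZ, Finset.mem_filter, Finset.mem_univ, true_and]
      have hv0 : e + s • z1 ≠ 0 := fun h => hQs s (by rw [h, QuadraticMap.map_zero])
      refine ⟨smul_ne_zero hc0 hv0, ?_⟩
      rw [QuadraticMap.map_smul, polar_smul_right, hpol s, smul_eq_mul, smul_eq_mul]
      have hcq : c * q (e + s • z1) = -(polar (⇑q) u0 e) := by
        rw [hc, div_mul_cancel₀ _ (hQs s)]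
      linear_combination (c + 1) * hcq - hcq
    · intro s1 _ s2 _ h
      have h1 := congrArg (polar (⇑q) u0) h
      rw [polar_smul_right, polar_smul_right, hpol s1, hpol s2, smul_eq_mul,
        smul_eq_mul] at h1
      have hceq := mul_right_cancel₀ he h1
      rw [hceq] at h
      have hc0 : -(polar (⇑q) u0 e) / q (e + s2 • z1) ≠ 0 :=
        div_ne_zero (neg_ne_zero.mpr he) (hQs s2)
      have h2 := smul_right_injective V hc0 h
      have h3 : (s1 - s2) • z1 = 0 := by
        rw [sub_smul, sub_eq_zero]
        exact add_left_cancel h2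
      rcases smul_eq_zero.mp h3 with h4 | h4
      · exact sub_eq_zero.mp h4
      · exact absurd h4 hz10
    · intro z hzmem
      simp only [hZ, Finset.mem_filter, Finset.mem_univ, true_and] at hzmem
      obtain ⟨hz0, hzeq⟩ := hzmem
      obtain ⟨x, y, hxy⟩ := hspan z
      have hx0 : x ≠ 0 := by
        intro h
        rw [h, zero_smul, zero_add] at hxy
        have h1 : polar (⇑q) u0 z = 0 := by rw [hxy, polar_smul_right, hz1, smul_zero]
        rw [h1, add_zero] at hzeq
        exact hz0 (haniso z hzeq)
      set s := y / x with hs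
      have hzx : z = x • (e + s • z1) := by
        rw [smul_add, smul_smul, hs, mul_div_cancel₀ _ hx0, hxy]
      refine ⟨s, Finset.mem_univ s, ?_⟩
      have hq : q z = x * x * q (e + s • z1) := by
        rw [hzx, QuadraticMap.map_smul, smul_eq_mul]
      have hbz : polar (⇑q) u0 z = x * polar (⇑q) u0 e := by
        rw [hzx, polar_smul_right, hpol s, smul_eq_mul]
      have h4 : x * (x * q (e + s • z1) + polar (⇑q) u0 e) = 0 := by
        rw [hq, hbz] at hzeq; linear_combination hzeq
      rcases mul_eq_zero.mp h4 with h5 | h5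
      · exact absurd h5 hx0
      · have h6 : -(polar (⇑q) u0 e) / q (e + s • z1) = x := by
          rw [div_eq_iff (hQs s)]; linear_combination -h5
        rw [h6, ← hzx]
  rw [step1, step2]

lemma sphere_card (hdim : finrank F V = 2)
    (hnd : ∀ x : V, (∀ y : V, polar (⇑q) x y = 0) → x = 0)
    (haniso : ∀ v : V, q v = 0 → v = 0)
    {t : F} (ht : t ≠ 0) :
    (univ.filter fun v : V => q v = t).card = Fintype.card F + 1 := by
  set f := Fintype.card F with hf
  have hf2 : 2 ≤ f := Fintype.one_lt_card
  rcases (univ.filter fun v : V => q v = t).eq_empty_or_nonempty with hemp | ⟨u0, hu0⟩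
  swap
  · simp only [Finset.mem_filter] at hu0
    exact sphere_card_of_mem q hdim hnd haniso ht hu0.2
  exfalso
  have htot : Fintype.card V = ∑ s : F, (univ.filter fun v : V => q v = s).card :=
    Finset.card_eq_sum_card_fiberwise (fun x _ => Finset.mem_univ (q x))
  have hcardV : Fintype.card V = f * f := by
    rw [card_eq_pow_finrank (K := F) (V := V), hdim]; ring
  have h0 : (univ.filter fun v : V => q v = (0:F)).card = 1 := by
    rw [show (univ.filter fun v : V => q v = (0:F)) = {0} from ?_, Finset.card_singleton]
    ext v
    simp only [Finset.mem_filter, Finset.mem_univ, true_and, Finset.mem_singleton]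
    exact ⟨fun h => haniso v h, fun h => by rw [h, QuadraticMap.map_zero]⟩
  set N : Finset F := (univ.erase (0:F)).filter
      (fun s => (univ.filter fun v : V => q v = s).Nonempty) with hN
  have hNsum : ∑ s : F, (univ.filter fun v : V => q v = s).card
      = 1 + ∑ s ∈ N, (univ.filter fun v : V => q v = s).card := by
    rw [← Finset.sum_erase_add _ _ (Finset.mem_univ (0:F)), h0, add_comm]
    congr 1
    rw [← Finset.sum_filter_add_sum_filter_not (univ.erase (0:F))
      (fun s => (univ.filter fun v : V => q v = s).Nonempty), ← hN]
    have : ∀ s ∈ (univ.erase (0:F)).filter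
        (fun s => ¬(univ.filter fun v : V => q v = s).Nonempty),
        (univ.filter fun v : V => q v = s).card = 0 := by
      intro s hs
      simp only [Finset.mem_filter, Finset.not_nonempty_iff_eq_empty] at hs
      rw [hs.2, Finset.card_empty]
    rw [Finset.sum_eq_zero this, add_zero]
  have hNval : ∀ s ∈ N, (univ.filter fun v : V => q v = s).card = f + 1 := by
    intro s hs
    simp only [hN, Finset.mem_filter, Finset.mem_erase] at hs
    obtain ⟨⟨hs0, -⟩, v, hv⟩ := hs
    simp only [Finset.mem_filter] at hv
    exact sphere_card_of_mem q hdim hnd haniso hs0 hv.2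
  have hsum2 : ∑ s ∈ N, (univ.filter fun v : V => q v = s).card = N.card * (f + 1) := by
    rw [Finset.sum_congr rfl hNval, Finset.sum_const, smul_eq_mul]
  have htN : t ∉ N := by
    simp [hN, hemp]
  have hNss : N ⊂ univ.erase (0:F) := by
    refine Finset.ssubset_iff_of_subset (Finset.filter_subset _ _) |>.mpr ?_
    exact ⟨t, Finset.mem_erase.mpr ⟨ht, Finset.mem_univ t⟩, htN⟩
  have hNcard : N.card < f - 1 := by
    have := Finset.card_lt_card hNss
    rwa [Finset.card_erase_of_mem (Finset.mem_univ _), Finset.card_univ] at this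
  have : f * f = 1 + N.card * (f + 1) := by rw [← hcardV, htot, hNsum, hsum2]
  have hle : N.card + 2 ≤ f := by omega
  nlinarith [this, hle, hf2]

lemma line_sphere_card (hdim : finrank F V = 2)
    (hnd : ∀ x : V, (∀ y : V, polar (⇑q) x y = 0) → x = 0)
    (haniso : ∀ v : V, q v = 0 → v = 0)
    {w : V} (hw : w ≠ 0) (r : F) {t : F} (ht : t ≠ 0) :
    (univ.filter fun u : V => q u = t ∧ polar (⇑q) w u = r).card ≤ 2 := by
  by_contra hcon
  push_neg at hcon
  obtain ⟨u1, u2, u3, h1, h2, h3, h12, h13, h23⟩ := Finset.two_lt_card_iff.mp hcon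
  simp only [Finset.mem_filter, Finset.mem_univ, true_and] at h1 h2 h3
  have hz2 : polar (⇑q) w (u2 - u1) = 0 := by
    rw [polar_sub_right, h1.2, h2.2, sub_self]
  have hz3 : polar (⇑q) w (u3 - u1) = 0 := by
    rw [polar_sub_right, h1.2, h3.2, sub_self]
  have hz20 : u2 - u1 ≠ 0 := sub_ne_zero.mpr (Ne.symm h12)
  obtain ⟨c, hc⟩ := ker_colinear q hdim hnd hw hz2 hz3 hz20
  have hq2 : q (u2 - u1) + polar (⇑q) u1 (u2 - u1) = 0 := by
    have : q (u1 + (u2 - u1)) = t := by rw [add_sub_cancel]; exact h2.1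
    rw [q_add', h1.1] at this
    linear_combination this
  have hq3 : q (u3 - u1) + polar (⇑q) u1 (u3 - u1) = 0 := by
    have : q (u1 + (u3 - u1)) = t := by rw [add_sub_cancel]; exact h3.1
    rw [q_add', h1.1] at this
    linear_combination this
  rw [hc, QuadraticMap.map_smul, polar_smul_right, smul_eq_mul, smul_eq_mul] at hq3
  have hc0 : c ≠ 0 := by
    rintro rfl
    rw [zero_smul, sub_eq_zero] at hc
    exact h13 hc.symm
  have hz2q : q (u2 - u1) ≠ 0 := fun h => hz20 (haniso _ h)
  have h5 : q (u2 - u1) * (c * (c - 1)) = 0 := by linear_combination hq3 - c * hq2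
  rcases mul_eq_zero.mp h5 with h6 | h6
  · exact hz2q h6
  · rcases mul_eq_zero.mp h6 with h7 | h7
    · exact hc0 h7
    · have hc1 : c = 1 := by linear_combination h7
      rw [hc1, one_smul, sub_left_inj] at hc
      exact h23 hc.symm

lemma reps_card_eq (haniso : ∀ v : V, q v = 0 → v = 0)
    {w1 w2 : V} (hq12 : q w1 = q w2) (a : F) :
    (univ.filter fun u : V => q u = a ∧ polar (⇑q) w1 u = q w1).card
      = (univ.filter fun u : V => q u = a ∧ polar (⇑q) w2 u = q w2).card := by
  rcases eq_or_ne w1 w2 with rfl | hne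
  · rfl
  have hz0 : w1 - w2 ≠ 0 := sub_ne_zero.mpr hne
  have hqz : q (w1 - w2) ≠ 0 := fun h => hz0 (haniso _ h)
  set z := w1 - w2 with hz
  set σ : V → V := fun x => x - (polar (⇑q) x z / q z) • z with hσ
  have hcz : ∀ x : V, (polar (⇑q) x z / q z) * q z = polar (⇑q) x z :=
    fun x => div_mul_cancel₀ _ hqz
  have hσq : ∀ x, q (σ x) = q x := by
    intro x
    simp only [hσ]
    rw [q_sub', QuadraticMap.map_smul, polar_smul_right, smul_eq_mul, smul_eq_mul]
    linear_combination (polar (⇑q) x z / q z) * hcz x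
  have hσadd : ∀ x y, σ (x + y) = σ x + σ y := by
    intro x y
    simp only [hσ, polar_add_left, add_div, add_smul]
    abel
  have hσpol : ∀ x y, polar (⇑q) (σ x) (σ y) = polar (⇑q) x y := by
    intro x y
    have h1 : polar (⇑q) (σ x) (σ y) = q (σ x + σ y) - q (σ x) - q (σ y) := rfl
    have h2 : polar (⇑q) x y = q (x + y) - q x - q y := rfl
    rw [h1, h2, ← hσadd, hσq, hσq, hσq]
  have hσσ : ∀ x, σ (σ x) = x := by
    intro x
    have hpz : polar (⇑q) (σ x) z = -(polar (⇑q) x z) := by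
      simp only [hσ]
      rw [polar_sub_left, polar_smul_left, smul_eq_mul, polar_self']
      linear_combination (-2 : F) * hcz x
    show σ x - (polar (⇑q) (σ x) z / q z) • z = x
    rw [hpz, neg_div, neg_smul, sub_neg_eq_add]
    simp only [hσ]
    rw [sub_add_cancel]
  have hσw : σ w1 = w2 := by
    have e1 : q z = q w1 + q w2 - polar (⇑q) w1 w2 := by rw [hz, q_sub']
    have e2 : polar (⇑q) w1 z = (q w1 + q w1) - polar (⇑q) w1 w2 := by
      rw [hz, polar_sub_right, polar_self']
    have hp : polar (⇑q) w1 z = q z := by rw [e2, e1, hq12]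
    simp only [hσ]
    rw [hp, div_self hqz, one_smul, hz]
    abel
  apply Finset.card_bij (fun u _ => σ u)
  · intro u hu
    simp only [Finset.mem_filter, Finset.mem_univ, true_and] at hu ⊢
    refine ⟨by rw [hσq, hu.1], ?_⟩
    rw [← hσw, hσpol, hu.2, hσq]
  · intro a1 _ a2 _ h
    have := congrArg σ h
    rwa [hσσ, hσσ] at this
  · intro u hu
    simp only [Finset.mem_filter, Finset.mem_univ, true_and] at hu
    refine ⟨σ u, ?_, hσσ u⟩
    simp only [Finset.mem_filter, Finset.mem_univ, true_and]
    refine ⟨by rw [hσq, hu.1], ?_⟩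
    have h3 := hσpol w1 (σ u)
    rw [hσw, hσσ] at h3
    rw [← h3, hu.2, hq12]

set_option maxHeartbeats 1000000 in
lemma key (hdim : finrank F V = 2)
    (hnd : ∀ x : V, (∀ y : V, polar (⇑q) x y = 0) → x = 0)
    (haniso : ∀ v : V, q v = 0 → v = 0)
    {a : F} (ha : a ≠ 0) {w : V} (hw : w ≠ 0) (hwa : q w ≠ a) :
    ∃ s u : V, q s = a ∧ q u = a ∧ q (w - s - u) = a := by
  classical
  set f := Fintype.card F with hf
  have haniso' : ∀ v : V, v ≠ 0 → q v ≠ 0 := fun v hv h => hv (haniso v h)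
  set S : Finset V := univ.filter (fun u : V => q u = a) with hS
  have hScard : S.card = f + 1 := sphere_card q hdim hnd haniso ha
  set R : V → Finset V :=
    fun w' => univ.filter (fun u : V => q u = a ∧ polar (⇑q) w' u = q w') with hR
  have hRalt : ∀ w' : V,
      R w' = univ.filter (fun u : V => q u = a ∧ q (w' - u) = a) := by
    intro w'
    apply Finset.filter_congr
    intro u _
    constructor
    · rintro ⟨h1, h2⟩
      refine ⟨h1, ?_⟩
      rw [q_sub', h1, h2]; ring
    · rintro ⟨h1, h2⟩
      refine ⟨h1, ?_⟩
      rw [q_sub', h1] at h2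
      linear_combination -h2
  have hsphtrans : ∀ u : V,
      (univ.filter fun w' : V => q (w' - u) = a).card = f + 1 := by
    intro u
    rw [← sphere_card q hdim hnd haniso ha]
    apply Finset.card_bij (fun w' _ => w' - u)
    · intro x hx
      simp only [Finset.mem_filter, Finset.mem_univ, true_and] at hx ⊢
      exact hx
    · intro x _ y _ h; exact sub_left_injective h
    · intro v hv
      simp only [Finset.mem_filter, Finset.mem_univ, true_and] at hv
      exact ⟨v + u, by simp [hv], by abel⟩
  have hsum : ∑ w' : V, (R w').card = (f + 1) * (f + 1) := by
    have h1 : ∀ w' : V, (R w').card = (S.filter fun u => q (w' - u) = a).card := by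
      intro w'
      rw [hRalt, hS, Finset.filter_filter]
    calc ∑ w' : V, (R w').card
        = ∑ w' : V, ∑ u ∈ S, (if q (w' - u) = a then 1 else 0) := by
          simp only [h1, Finset.card_filter]
      _ = ∑ u ∈ S, ∑ w' : V, (if q (w' - u) = a then 1 else 0) := Finset.sum_comm
      _ = ∑ u ∈ S, (univ.filter fun w' : V => q (w' - u) = a).card := by
          simp only [Finset.card_filter]
      _ = ∑ _u ∈ S, (f + 1) := Finset.sum_congr rfl (fun u _ => hsphtrans u)
      _ = (f + 1) * (f + 1) := by rw [Finset.sum_const, hScard, smul_eq_mul]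
  have hR0 : (R 0).card = f + 1 := by
    have : R 0 = S := by
      rw [hR, hS]
      apply Finset.filter_congr
      intro u _
      simp [polar_zero_left]
    rw [this, hScard]
  have hsum0 : ∑ w' ∈ univ.erase (0 : V), (R w').card = (f + 1) * f := by
    have h2 := hsum
    rw [← Finset.sum_erase_add _ _ (Finset.mem_univ (0 : V)), hR0] at h2
    have h3 : (f + 1) * (f + 1) = (f + 1) * f + (f + 1) := by ring
    omega
  set G : Finset F :=
    univ.filter (fun t => t ≠ 0 ∧ ∀ w' : V, q w' = t → (R w').Nonempty) with hG
  have hRzero : ∀ w' : V, w' ≠ 0 → q w' ∉ G → (R w').card = 0 := by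
    intro w' hw' hqG
    have ht0 : q w' ≠ 0 := haniso' w' hw'
    simp only [hG, Finset.mem_filter, Finset.mem_univ, true_and, not_and, ht0,
      not_forall] at hqG
    obtain ⟨w'', hqw'', hemp⟩ := hqG ht0
    have hemp' : (R w'').card = 0 := by
      rw [Finset.card_eq_zero, ← Finset.not_nonempty_iff_eq_empty]
      exact hemp
    have heq := reps_card_eq q haniso (hqw'' : q w'' = q w') a
    simp only [hR] at hemp' ⊢
    rw [← heq]
    exact hemp'
  have hRle2 : ∀ w' : V, w' ≠ 0 → (R w').card ≤ 2 := by
    intro w' hw'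
    rw [hR]
    exact line_sphere_card q hdim hnd haniso hw' _ ha
  have hgcard : ((univ.erase (0 : V)).filter (fun w' => q w' ∈ G)).card
      = G.card * (f + 1) := by
    rw [Finset.card_eq_sum_card_fiberwise
      (s := (univ.erase (0 : V)).filter (fun w' => q w' ∈ G))
      (f := fun w' => q w') (t := G) (fun x hx => (Finset.mem_filter.mp hx).2)]
    have hfib : ∀ t ∈ G,
        (((univ.erase (0 : V)).filter (fun w' => q w' ∈ G)).filter
          (fun w' => q w' = t)).card = f + 1 := by
      intro t htG
      have ht0 : t ≠ 0 := by
        simp only [hG, Finset.mem_filter] at htG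
        exact htG.2.1
      rw [← sphere_card q hdim hnd haniso ht0]
      congr 1
      ext v
      constructor
      · intro hv
        rw [Finset.mem_filter] at hv ⊢
        exact ⟨Finset.mem_univ v, hv.2⟩
      · intro hv
        rw [Finset.mem_filter] at hv
        have h := hv.2
        refine Finset.mem_filter.mpr
          ⟨Finset.mem_filter.mpr ⟨Finset.mem_erase.mpr ⟨?_, Finset.mem_univ v⟩, ?_⟩, h⟩
        · intro h0; rw [h0, QuadraticMap.map_zero] at h; exact ht0 h.symm
        · rw [h]; exact htG
    rw [Finset.sum_congr rfl hfib, Finset.sum_const, smul_eq_mul]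
  have hGf : f ≤ 2 * G.card := by
    have hb : (f + 1) * f ≤ 2 * (G.card * (f + 1)) := by
      rw [← hsum0, ← hgcard]
      rw [← Finset.sum_filter_add_sum_filter_not (univ.erase (0 : V))
        (fun w' => q w' ∈ G) (fun w' => (R w').card)]
      have hz : ∑ w' ∈ (univ.erase (0 : V)).filter (fun w' => q w' ∉ G),
          (R w').card = 0 := by
        apply Finset.sum_eq_zero
        intro w' hw'
        simp only [Finset.mem_filter, Finset.mem_erase, Finset.mem_univ, true_and] at hw'
        exact hRzero w' hw'.1.1 hw'.2
      rw [hz, add_zero]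
      calc ∑ w' ∈ (univ.erase (0 : V)).filter (fun w' => q w' ∈ G), (R w').card
          ≤ ∑ w' ∈ (univ.erase (0 : V)).filter (fun w' => q w' ∈ G), 2 := by
            apply Finset.sum_le_sum
            intro w' hw'
            simp only [Finset.mem_filter, Finset.mem_erase, Finset.mem_univ,
              true_and] at hw'
            exact hRle2 w' hw'.1.1
        _ = 2 * ((univ.erase (0 : V)).filter (fun w' => q w' ∈ G)).card := by
            rw [Finset.sum_const, smul_eq_mul, mul_comm]
    have hp : 0 < f + 1 := Nat.succ_pos f
    have : f * (f + 1) ≤ (2 * G.card) * (f + 1) := by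
      calc f * (f + 1) = (f + 1) * f := mul_comm _ _
        _ ≤ 2 * (G.card * (f + 1)) := hb
        _ = (2 * G.card) * (f + 1) := by ring
    exact Nat.le_of_mul_le_mul_right this hp
  have hfind : ∃ s ∈ S, q (w - s) ∈ G := by
    by_contra hcon
    push_neg at hcon
    set B : Finset F := univ.filter (fun t : F => t ∉ G ∧ t ≠ 0) with hB
    have hSsplit : S.card = ∑ t : F, (S.filter (fun s => q (w - s) = t)).card :=
      Finset.card_eq_sum_card_fiberwise (fun s _ => Finset.mem_univ _)
    have hfib0 : ∀ t : F, t ∉ B → (S.filter (fun s => q (w - s) = t)).card = 0 := by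
      intro t htB
      rw [Finset.card_eq_zero, Finset.filter_eq_empty_iff]
      intro s hs hqt
      simp only [hS, Finset.mem_filter, Finset.mem_univ, true_and] at hs
      simp only [hB, Finset.mem_filter, Finset.mem_univ, true_and, not_and,
        not_not, not_ne_iff] at htB
      by_cases htG : t ∈ G
      · exact hcon s (by simp [hS, hs]) (hqt ▸ htG)
      · have ht0 := htB htG
        rw [ht0] at hqt
        have : w - s = 0 := haniso _ hqt
        have hws : w = s := by rwa [sub_eq_zero] at this
        exact hwa (hws ▸ hs)
    have hfib2 : ∀ t : F, (S.filter (fun s => q (w - s) = t)).card ≤ 2 := by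
      intro t
      have heq : S.filter (fun s => q (w - s) = t)
          = univ.filter (fun s : V => q s = a ∧ polar (⇑q) w s = q w + a - t) := by
        rw [hS, Finset.filter_filter]
        apply Finset.filter_congr
        intro u _
        constructor
        · rintro ⟨h1, h2⟩
          refine ⟨h1, ?_⟩
          rw [q_sub', h1] at h2
          linear_combination -h2
        · rintro ⟨h1, h2⟩
          refine ⟨h1, ?_⟩
          rw [q_sub', h1, h2]; ring
      rw [heq]
      exact line_sphere_card q hdim hnd haniso hw _ ha
    have h1 : S.card ≤ 2 * B.card := by
      rw [hSsplit]
      have h2 : ∑ t ∈ B, (S.filter (fun s => q (w - s) = t)).card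
          = ∑ t : F, (S.filter (fun s => q (w - s) = t)).card :=
        Finset.sum_subset (Finset.subset_univ B) (fun t _ ht => hfib0 t ht)
      rw [← h2]
      calc ∑ t ∈ B, (S.filter (fun s => q (w - s) = t)).card
          ≤ ∑ _t ∈ B, 2 := Finset.sum_le_sum (fun t _ => hfib2 t)
        _ = 2 * B.card := by rw [Finset.sum_const, smul_eq_mul, mul_comm]
    have hdisjBG : Disjoint B G := by
      rw [Finset.disjoint_left]
      intro t htB htG
      simp only [hB, Finset.mem_filter] at htB
      exact htB.2.1 htG
    have h0B : (0 : F) ∉ B := by simp [hB]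
    have h0G : (0 : F) ∉ G := by simp [hG]
    have hcards : B.card + G.card + 1 ≤ f := by
      have hd2 : Disjoint (B ∪ G) {(0 : F)} := by
        rw [Finset.disjoint_right]
        intro t ht
        simp only [Finset.mem_singleton] at ht
        subst ht
        simp [Finset.mem_union, h0B, h0G]
      calc B.card + G.card + 1
          = (B ∪ G ∪ {(0:F)}).card := by
            rw [Finset.card_union_of_disjoint hd2, Finset.card_union_of_disjoint hdisjBG,
              Finset.card_singleton]
        _ ≤ f := by
            rw [hf, ← Finset.card_univ]
            exact Finset.card_le_card (Finset.subset_univ _)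
    rw [hScard] at h1
    omega
  obtain ⟨s, hsS, hsG⟩ := hfind
  simp only [hG, Finset.mem_filter, Finset.mem_univ, true_and] at hsG
  obtain ⟨-, hGall⟩ := hsG
  obtain ⟨u, hu⟩ := hGall (w - s) rfl
  simp only [hR, Finset.mem_filter, Finset.mem_univ, true_and] at hu
  obtain ⟨huq, hupol⟩ := hu
  simp only [hS, Finset.mem_filter, Finset.mem_univ, true_and] at hsS
  refine ⟨s, u, hsS, huq, ?_⟩
  rw [q_sub' q (w - s) u, hupol, huq]
  ring

end Counting

end RepGraphAux

/-- Over a finite field, a 2-dimensional non-degenerate anisotropic form `q` and `a ≠ 0`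
yield `diam G_{q,a} ≤ 3`; in particular `G_{q,a}` is connected. -/
theorem stmt_13 {F V : Type*} [Field F] [Fintype F]
    [AddCommGroup V] [Module F V]
    (q : QuadraticForm F V) (hdim : Module.finrank F V = 2)
    (hnd : ∀ x : V, (∀ y : V, polar (⇑q) x y = 0) → x = 0)
    (haniso : ∀ v : V, q v = 0 → v = 0)
    (a : F) (ha : a ≠ 0) :
    (repGraph q a).ediam ≤ 3 ∧ (repGraph q a).Connected := by
  classical
  have hfd : FiniteDimensional F V := .of_finrank_pos (by rw [hdim]; norm_num)
  have hfin : Finite V := Module.finite_of_finite F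
  haveI : Fintype V := Fintype.ofFinite V
  have hadj : ∀ {x y : V}, q (x - y) = a → (repGraph q a).Adj x y := by
    intro x y h
    refine ⟨?_, h⟩
    rintro rfl
    rw [sub_self, QuadraticMap.map_zero] at h
    exact ha h.symm
  have hwalk : ∀ x y : V, ∃ p : (repGraph q a).Walk x y, p.length ≤ 3 := by
    intro x y
    by_cases h0 : y = x
    · subst h0; exact ⟨.nil, by simp⟩
    by_cases h1 : q (x - y) = a
    · exact ⟨.cons (hadj h1) .nil, by simp⟩
    set w := y - x with hwdef
    have hw0 : w ≠ 0 := sub_ne_zero.mpr h0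
    have hxy : x - y = -w := by rw [hwdef]; abel
    have hqwa : q w ≠ a := by
      intro h
      apply h1
      rw [hxy, QuadraticMap.map_neg]
      exact h
    by_cases h2 : ∃ u : V, q u = a ∧ polar (⇑q) w u = q w
    · obtain ⟨u, hu1, hu2⟩ := h2
      have e1 : (repGraph q a).Adj x (x + u) := by
        apply hadj
        have h3 : x - (x + u) = -u := by abel
        rw [h3, QuadraticMap.map_neg, hu1]
      have e2 : (repGraph q a).Adj (x + u) y := by
        apply hadj
        have h3 : (x + u) - y = -(w - u) := by rw [hwdef]; abel
        rw [h3, QuadraticMap.map_neg, RepGraphAux.q_sub', hu1, hu2]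
        ring
      exact ⟨.cons e1 (.cons e2 .nil), by simp⟩
    · obtain ⟨s, u, hs, hu, hsu⟩ := RepGraphAux.key q hdim hnd haniso ha hw0 hqwa
      have e1 : (repGraph q a).Adj x (x + s) := by
        apply hadj
        have h3 : x - (x + s) = -s := by abel
        rw [h3, QuadraticMap.map_neg, hs]
      have e2 : (repGraph q a).Adj (x + s) (x + s + u) := by
        apply hadj
        have h3 : (x + s) - (x + s + u) = -u := by abel
        rw [h3, QuadraticMap.map_neg, hu]
      have e3 : (repGraph q a).Adj (x + s + u) y := by
        apply hadj
        have h3 : (x + s + u) - y = -(w - s - u) := by rw [hwdef]; abel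
        rw [h3, QuadraticMap.map_neg, hsu]
      exact ⟨.cons e1 (.cons e2 (.cons e3 .nil)), by simp⟩
  constructor
  · apply SimpleGraph.ediam_le_of_edist_le
    intro u v
    obtain ⟨p, hp⟩ := hwalk u v
    calc (repGraph q a).edist u v ≤ (p.length : ℕ∞) := SimpleGraph.edist_le p
      _ ≤ 3 := by exact_mod_cast hp
  · haveI : Nonempty V := ⟨0⟩
    refine ⟨fun u v => ?_⟩
    obtain ⟨p, -⟩ := hwalk u v
    exact p.reachable
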